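/- The set L(ω) of bounded sequences with exactly countably infinitely many accumulation points is spaceable in ℓ∞: there exists a closed infinite-dimensional subspace Y of ℓ∞, isometric to c₀, such that every non-zero element of Y has exactly countably infinitely many accumulation points. -/

import Mathlib

open Filter Topology Set

/-- The set of accumulation points of a real sequence. -/
def AccPts (x : ℕ → ℝ) : Set ℝ := {η | ∀ ε > 0, {n : ℕ | |x n - η| < ε}.Infinite}

/-- The Banach space `ℓ∞` of bounded real sequences. -/
noncomputable abbrev linf : Type := lp (fun _ : ℕ => ℝ) ⊤

open scoped ZeroAtInfty


noncomputable def cseq (j : ℕ) : ℝ := 1 - (2:ℝ)⁻¹ ^ j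

lemma cseq_nonneg (j : ℕ) : 0 ≤ cseq j := by
  have : (2:ℝ)⁻¹ ^ j ≤ 1 := pow_le_one₀ (by norm_num) (by norm_num)
  simp only [cseq]; linarith

lemma cseq_le_one (j : ℕ) : cseq j ≤ 1 := by
  have : (0:ℝ) ≤ (2:ℝ)⁻¹ ^ j := by positivity
  simp only [cseq]; linarith

lemma cseq_strictMono : StrictMono cseq := by
  intro a b hab
  have := pow_lt_pow_right_of_lt_one₀ (by norm_num : (0:ℝ) < 2⁻¹) (by norm_num) hab
  simp only [cseq]; linarith

lemma tendsto_cseq : Tendsto cseq atTop (𝓝 1) := by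
  have h : Tendsto (fun j : ℕ => (2:ℝ)⁻¹ ^ j) atTop (𝓝 0) :=
    tendsto_pow_atTop_nhds_zero_of_lt_one (by norm_num) (by norm_num)
  have := h.const_sub 1
  exact (by simpa only [sub_zero] using this : Tendsto (fun j : ℕ => 1 - (2:ℝ)⁻¹ ^ j) atTop (𝓝 1))

def eidx (n : ℕ) : ℕ × ℕ := (Nat.unpair n).2.unpair

lemma eidx_fiber_infinite (k j : ℕ) : {n : ℕ | eidx n = (k, j)}.Infinite := by
  apply Set.infinite_of_injective_forall_mem
    (f := fun m : ℕ => Nat.pair m (Nat.pair k j))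
  · intro a b hab
    have := congrArg (fun n => (Nat.unpair n).1) hab
    simpa using this
  · intro m
    simp [eidx]

lemma eidx_surj : Function.Surjective eidx := fun p =>
  ⟨Nat.pair 0 (Nat.pair p.1 p.2), by simp [eidx]⟩
noncomputable def Tfun (x : ℕ → ℝ) : ℕ → ℝ := fun n => x (eidx n).1 * cseq (eidx n).2

def Svals (x : ℕ → ℝ) : Set ℝ := Set.range (fun p : ℕ × ℕ => x p.1 * cseq p.2)

lemma range_Tfun (x : ℕ → ℝ) : Set.range (Tfun x) = Svals x := by
  have : Tfun x = (fun p : ℕ × ℕ => x p.1 * cseq p.2) ∘ eidx := rfl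
  rw [this, Set.range_comp, eidx_surj.range_eq, Set.image_univ, Svals]

lemma accPts_Tfun (x : ℕ → ℝ) : AccPts (Tfun x) = closure (Svals x) := by
  ext η
  constructor
  · intro hη
    rw [Metric.mem_closure_iff]
    intro ε hε
    obtain ⟨n, hn⟩ := (hη ε hε).nonempty
    exact ⟨Tfun x n, by rw [← range_Tfun]; exact Set.mem_range_self n,
      by rw [Real.dist_eq, abs_sub_comm]; exact hn⟩
  · intro hη ε hε
    rw [Metric.mem_closure_iff] at hη
    obtain ⟨b, hb, hdist⟩ := hη ε hε
    obtain ⟨⟨k, j⟩, rfl⟩ := hb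
    apply (eidx_fiber_infinite k j).mono
    intro n hn
    simp only [Set.mem_setOf_eq] at hn ⊢
    rw [Tfun, hn]
    rw [Real.dist_eq, abs_sub_comm] at hdist
    exact hdist

lemma accPts_infinite {x : ℕ → ℝ} {k₀ : ℕ} (hx0 : x k₀ ≠ 0) :
    (AccPts (Tfun x)).Infinite := by
  rw [accPts_Tfun]
  apply Set.infinite_of_injective_forall_mem (f := fun j : ℕ => x k₀ * cseq j)
  · intro a b hab
    exact cseq_strictMono.injective (mul_left_cancel₀ hx0 hab)
  · intro j
    exact subset_closure ⟨(k₀, j), rfl⟩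

lemma closure_Svals_subset {x : ℕ → ℝ} (hx : Tendsto x atTop (𝓝 0)) :
    closure (Svals x) ⊆ Svals x ∪ Set.range x ∪ {0} := by
  intro η hη
  by_cases hη0 : η = 0
  · exact Or.inr (by simp [hη0])
  by_cases hηr : η ∈ Set.range x
  · exact Or.inl (Or.inr hηr)
  left; left
  -- finitely many k with |x k| ≥ |η|/2
  have hηpos : 0 < |η| / 2 := by positivity
  have hK : {k : ℕ | ¬ |x k| < |η| / 2}.Finite := by
    have := hx.eventually (Metric.ball_mem_nhds 0 hηpos)
    rw [← Nat.cofinite_eq_atTop, Filter.eventually_cofinite] at this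
    apply this.subset
    intro k hk
    simp only [Set.mem_setOf_eq] at hk ⊢
    simpa [Real.dist_eq] using hk
  -- for each k, finitely many j close to η
  have hJ : ∀ k : ℕ, {j : ℕ | |x k * cseq j - η| < |x k - η| / 2}.Finite := by
    intro k
    have hxkη : 0 < |x k - η| / 2 := by
      have : x k ≠ η := fun h => hηr ⟨k, h⟩
      have : x k - η ≠ 0 := sub_ne_zero.mpr this
      positivity
    have htd : Tendsto (fun j => x k * cseq j) atTop (𝓝 (x k)) := by
      simpa using tendsto_cseq.const_mul (x k)
    have := htd.eventually (Metric.ball_mem_nhds (x k) hxkη)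
    rw [← Nat.cofinite_eq_atTop, Filter.eventually_cofinite] at this
    apply this.subset
    intro j hj
    simp only [Set.mem_setOf_eq, Metric.mem_ball, Real.dist_eq] at hj ⊢
    intro hball
    have h1 : |x k - η| ≤ |x k * cseq j - η| + |x k * cseq j - x k| := by
      have := abs_sub_abs_le_abs_sub (x k - η) 0
      calc |x k - η| = |(x k - η)| := rfl
        _ ≤ |x k * cseq j - η| + |x k - x k * cseq j| := by
              have := abs_sub (x k * cseq j - η) (x k * cseq j - x k)
              rw [abs_sub_comm (x k) (x k * cseq j)]
              have : x k - η = (x k * cseq j - η) - (x k * cseq j - x k) := by ring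
              rw [this]
              exact abs_sub _ _
        _ = |x k * cseq j - η| + |x k * cseq j - x k| := by rw [abs_sub_comm (x k) _]
    linarith
  -- set up the uniform ε'
  set Kf := hK.toFinset with hKf
  set εs : Finset ℝ := insert (|η| / 2) (Kf.image fun k => |x k - η| / 2) with hεs
  have hεsne : εs.Nonempty := ⟨_, Finset.mem_insert_self _ _⟩
  set ε' := εs.min' hεsne with hε'
  have hε'pos : 0 < ε' := by
    have hmem := εs.min'_mem hεsne
    rcases Finset.mem_insert.mp hmem with h | h
    · rw [hε', h]; linarith [hηpos]
    · obtain ⟨k, _, hk⟩ := Finset.mem_image.mp h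
      rw [hε', ← hk]
      have : x k ≠ η := fun h => hηr ⟨k, h⟩
      have : x k - η ≠ 0 := sub_ne_zero.mpr this
      positivity
  have hε'le1 : ε' ≤ |η| / 2 := Finset.min'_le _ _ (Finset.mem_insert_self _ _)
  have hε'lek : ∀ k ∈ Kf, ε' ≤ |x k - η| / 2 := fun k hk =>
    Finset.min'_le _ _ (Finset.mem_insert_of_mem (Finset.mem_image_of_mem _ hk))
  -- the near-η pairs form a finite set
  set P := {p : ℕ × ℕ | |x p.1 * cseq p.2 - η| < ε'} with hP
  have hPfin : P.Finite := by
    apply Set.Finite.subset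
      (Set.Finite.biUnion Kf.finite_toSet fun k _ => (hJ k).image fun j => (k, j))
    rintro ⟨k, j⟩ hp
    have hp : |x k * cseq j - η| < ε' := hp
    have hk : k ∈ Kf := by
      rw [hKf, Set.Finite.mem_toFinset]
      intro habs
      have h1 : |x k * cseq j| = |x k| * cseq j := by
        rw [abs_mul, abs_of_nonneg (cseq_nonneg j)]
      have h2 : |x k * cseq j| ≤ |x k| := by
        rw [h1]
        calc |x k| * cseq j ≤ |x k| * 1 := by
              apply mul_le_mul_of_nonneg_left (cseq_le_one j) (abs_nonneg _)
          _ = |x k| := mul_one _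
      have h3 : |η| - |x k * cseq j| ≤ |x k * cseq j - η| := by
        have := abs_sub_abs_le_abs_sub η (x k * cseq j)
        rw [abs_sub_comm]
        linarith [abs_sub_abs_le_abs_sub η (x k * cseq j)]
      linarith
    refine Set.mem_biUnion hk ?_
    exact ⟨j, by exact lt_of_lt_of_le hp (hε'lek k hk), rfl⟩
  -- conclude
  set V := (fun p : ℕ × ℕ => x p.1 * cseq p.2) '' P with hV
  have hVfin : V.Finite := hPfin.image _
  have hsub : Svals x ⊆ V ∪ (Metric.ball η ε')ᶜ := by
    rintro s ⟨p, rfl⟩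
    by_cases hs : |x p.1 * cseq p.2 - η| < ε'
    · exact Or.inl ⟨p, hs, rfl⟩
    · right
      simp only [Set.mem_compl_iff, Metric.mem_ball, Real.dist_eq, not_lt]
      exact not_lt.mp hs
  have hclosed : IsClosed (V ∪ (Metric.ball η ε')ᶜ) :=
    hVfin.isClosed.union Metric.isOpen_ball.isClosed_compl
  have := closure_minimal hsub hclosed hη
  rcases this with h | h
  · obtain ⟨p, _, rfl⟩ := h
    exact ⟨p, rfl⟩
  · exact absurd (Metric.mem_ball_self hε'pos) h

lemma Tfun_bound (y : C₀(ℕ, ℝ)) (n : ℕ) : ‖Tfun (⇑y) n‖ ≤ ‖y‖ := by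
  have h1 : ‖Tfun (⇑y) n‖ = |y (eidx n).1| * cseq (eidx n).2 := by
    rw [Tfun, Real.norm_eq_abs, abs_mul, abs_of_nonneg (cseq_nonneg _)]
  rw [h1]
  calc |y (eidx n).1| * cseq (eidx n).2 ≤ |y (eidx n).1| * 1 :=
        mul_le_mul_of_nonneg_left (cseq_le_one _) (abs_nonneg _)
    _ = ‖y.toBCF (eidx n).1‖ := by rw [mul_one]; rfl
    _ ≤ ‖y.toBCF‖ := y.toBCF.norm_coe_le_norm _
    _ = ‖y‖ := ZeroAtInftyContinuousMap.norm_toBCF_eq_norm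

lemma Tfun_memℓp (y : C₀(ℕ, ℝ)) : Memℓp (Tfun ⇑y) ⊤ := by
  apply memℓp_infty
  refine ⟨‖y‖, ?_⟩
  rintro r ⟨n, rfl⟩
  exact Tfun_bound y n

noncomputable def TL : C₀(ℕ, ℝ) →ₗ[ℝ] linf where
  toFun y := ⟨Tfun ⇑y, Tfun_memℓp y⟩
  map_add' y z := by
    apply lp.ext
    funext n
    show Tfun (⇑(y + z)) n = Tfun ⇑y n + Tfun ⇑z n
    simp [Tfun]; ring
  map_smul' c y := by
    apply lp.ext
    funext n
    show Tfun (⇑(c • y)) n = c * Tfun ⇑y n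
    simp [Tfun]; ring

lemma TL_apply (y : C₀(ℕ, ℝ)) (n : ℕ) : (TL y : ℕ → ℝ) n = Tfun (⇑y) n := rfl

set_option synthInstance.maxHeartbeats 800000 in
lemma TL_norm (y : C₀(ℕ, ℝ)) : ‖TL y‖ = ‖y‖ := by
  apply le_antisymm
  · exact lp.norm_le_of_forall_le (norm_nonneg y) fun n => Tfun_bound y n
  · rw [← ZeroAtInftyContinuousMap.norm_toBCF_eq_norm]
    rw [BoundedContinuousFunction.norm_le (norm_nonneg _)]
    intro k
    have key : ∀ j : ℕ, |y k| * cseq j ≤ ‖TL y‖ := by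
      intro j
      have hn : eidx (Nat.pair 0 (Nat.pair k j)) = (k, j) := by simp [eidx]
      have := lp.norm_apply_le_norm ENNReal.top_ne_zero (TL y) (Nat.pair 0 (Nat.pair k j))
      rwa [TL_apply, Tfun, hn, Real.norm_eq_abs, abs_mul,
        abs_of_nonneg (cseq_nonneg _)] at this
    have htd : Tendsto (fun j => |y k| * cseq j) atTop (𝓝 (|y k|)) := by
      simpa using tendsto_cseq.const_mul |y k|
    have := le_of_tendsto htd (Filter.Eventually.of_forall key)
    simpa using this

noncomputable def dirac (k : ℕ) : C₀(ℕ, ℝ) where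
  toFun := fun n => if n = k then 1 else 0
  continuous_toFun := continuous_of_discreteTopology
  zero_at_infty' := by
    rw [cocompact_eq_cofinite]
    apply Filter.Tendsto.congr' _ tendsto_const_nhds
    rw [Filter.eventuallyEq_iff_exists_mem]
    exact ⟨{k}ᶜ, by simp [Filter.mem_cofinite], fun n hn => by
      simp only [Set.mem_compl_iff, Set.mem_singleton_iff] at hn
      simp [hn]⟩

lemma dirac_indep : LinearIndependent ℝ dirac := by
  rw [linearIndependent_iff']
  intro s g hsum i hi
  have h := congrArg (fun f : C₀(ℕ, ℝ) => f i) hsum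
  have hcoe : ∀ (t : Finset ℕ) (n : ℕ), (∑ k ∈ t, g k • dirac k) n
      = ∑ k ∈ t, g k * (if n = k then 1 else 0) := by
    intro t n
    induction t using Finset.induction with
    | empty => simp
    | insert _ _ hnot ih =>
      rw [Finset.sum_insert hnot, Finset.sum_insert hnot, ← ih]
      simp [dirac]
  rw [hcoe] at h
  simp only [ZeroAtInftyContinuousMap.coe_zero, Pi.zero_apply] at h
  rw [Finset.sum_eq_single i (fun b _ hb => by simp [Ne.symm hb]) (fun h' => absurd hi h')] at h
  simpa using h

lemma c0_not_finite : ¬ Module.Finite ℝ C₀(ℕ, ℝ) := fun _ =>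
  Module.Finite.not_linearIndependent_of_infinite (v := dirac) dirac_indep


noncomputable def Tiso : C₀(ℕ, ℝ) →ₗᵢ[ℝ] linf := ⟨TL, TL_norm⟩

theorem stmt_17 :
    ∃ Y : Submodule ℝ linf, IsClosed (Y : Set linf) ∧ ¬ Module.Finite ℝ Y ∧
      Nonempty (C₀(ℕ, ℝ) ≃ₗᵢ[ℝ] Y) ∧
      ∀ x ∈ Y, x ≠ 0 → (AccPts ⇑x).Infinite ∧ (AccPts ⇑x).Countable := by
  refine ⟨LinearMap.range Tiso.toLinearMap, ?_, ?_, ⟨Tiso.equivRange⟩, ?_⟩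
  · rw [LinearMap.coe_range]
    exact Tiso.isometry.isClosedEmbedding.isClosed_range
  · intro hfin
    exact c0_not_finite (Module.Finite.equiv Tiso.equivRange.symm.toLinearEquiv)
  · rintro x ⟨y, rfl⟩ hx0
    have hy0 : y ≠ 0 := fun h => hx0 (by rw [h, map_zero])
    obtain ⟨k₀, hk₀⟩ : ∃ k, y k ≠ 0 := by
      by_contra h
      push_neg at h
      exact hy0 (DFunLike.ext _ _ fun n => by simpa using h n)
    have hcoe : ⇑(Tiso.toLinearMap y) = Tfun ⇑y := rfl
    rw [hcoe]
    have hx : Tendsto (⇑y) atTop (𝓝 0) := by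
      rw [← Nat.cofinite_eq_atTop, ← cocompact_eq_cofinite]
      exact zero_at_infty y
    refine ⟨accPts_infinite hk₀, ?_⟩
    rw [accPts_Tfun]
    apply Set.Countable.mono (closure_Svals_subset hx)
    exact (((Set.countable_range _).union (Set.countable_range _)).union
      (Set.countable_singleton 0))
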